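/- Let G be a graph, {s,t} a vertex separator of G, and H a subgraph of G which is a subdivision of K_4. Then there exists a single connected component X_0 of G - {s,t} such that all four branching nodes of H (the vertices of degree 3 in H) belong to X_0 ∪ {s,t}. -/

import Mathlib

/-- The complete graph `K₄`, realized on vertex set `{0,1,2,3} ⊆ ℕ`. -/
def K4 : SimpleGraph ℕ :=
  SimpleGraph.fromRel (fun a b => a < 4 ∧ b < 4 ∧ a ≠ b)

/-- One subdivision step: delete an edge `(u,v)` and add a new vertex `x`
(not occurring in the graph) adjacent to both `u` and `v`. -/
def SubdivStep (G G' : SimpleGraph ℕ) : Prop :=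
  ∃ u v x : ℕ, G.Adj u v ∧ x ∉ G.support ∧
    G' = SimpleGraph.fromEdgeSet ((G.edgeSet \ {s(u, v)}) ∪ {s(u, x), s(x, v)})

/-- `G` is a subdivision of `K₄`. -/
def IsK4Subdivision (G : SimpleGraph ℕ) : Prop :=
  Relation.ReflTransGen SubdivStep K4 G

namespace K4Aux

open SimpleGraph

/-- Two walks between `a` and `b` that only share `a`, `b` and share no edges. -/
def WalkSep {H : SimpleGraph ℕ} {a b : ℕ} (p q : H.Walk a b) : Prop :=
  (∀ z ∈ p.support, z ∈ q.support → z = a ∨ z = b) ∧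
  (∀ e ∈ p.edges, e ∉ q.edges)

/-- The invariant maintained along subdivisions. -/
def Inv (H : SimpleGraph ℕ) : Prop :=
  H.support.Finite ∧
  (∀ w, (H.neighborSet w).ncard = 3 ↔ w < 4) ∧
  (∀ a b : ℕ, a < 4 → b < 4 → a ≠ b →
    ∃ p q r : H.Walk a b, WalkSep p q ∧ WalkSep p r ∧ WalkSep q r)

lemma k4_adj {a b : ℕ} (ha : a < 4) (hb : b < 4) (hab : a ≠ b) : K4.Adj a b := by
  simp only [K4, SimpleGraph.fromRel_adj]
  exact ⟨hab, Or.inl ⟨ha, hb, hab⟩⟩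

lemma k4_adj_iff {a b : ℕ} : K4.Adj a b ↔ a < 4 ∧ b < 4 ∧ a ≠ b := by
  simp only [K4, SimpleGraph.fromRel_adj]
  constructor
  · rintro ⟨hne, h | h⟩ <;> tauto
  · rintro ⟨ha, hb, hab⟩; exact ⟨hab, Or.inl ⟨ha, hb, hab⟩⟩

lemma mem_support_of_walk' {H : SimpleGraph ℕ} {a b : ℕ}
    (p : H.Walk a b) : ∀ z ∈ p.support, z ∈ H.support ∨ z = b := by
  induction p with
  | nil => intro z hz; simp at hz; simp [hz]
  | cons h p ih =>
    intro z hz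
    rw [SimpleGraph.Walk.support_cons, List.mem_cons] at hz
    rcases hz with rfl | hz
    · exact Or.inl ⟨_, h⟩
    · exact ih z hz

lemma mem_support_of_walk {H : SimpleGraph ℕ} {a b : ℕ} (hb : b ∈ H.support)
    (p : H.Walk a b) : ∀ z ∈ p.support, z ∈ H.support := by
  intro z hz
  rcases mem_support_of_walk' p z hz with h | rfl
  · exact h
  · exact hb

lemma pick_clean {H : SimpleGraph ℕ} {a b s t : ℕ}
    (p q r : H.Walk a b) (hpq : WalkSep p q) (hpr : WalkSep p r) (hqr : WalkSep q r)
    (hsa : s ≠ a) (hsb : s ≠ b) (hta : t ≠ a) (htb : t ≠ b) :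
    ∃ w : H.Walk a b, s ∉ w.support ∧ t ∉ w.support := by
  have exP : ∀ z, z ≠ a → z ≠ b → z ∈ p.support → z ∉ q.support ∧ z ∉ r.support := by
    intro z hza hzb hz
    constructor
    · intro hq; rcases hpq.1 z hz hq with rfl | rfl <;> simp_all
    · intro hr; rcases hpr.1 z hz hr with rfl | rfl <;> simp_all
  have exQ : ∀ z, z ≠ a → z ≠ b → z ∈ q.support → z ∉ r.support := by
    intro z hza hzb hz hr; rcases hqr.1 z hz hr with rfl | rfl <;> simp_all
  by_cases hsp : s ∈ p.support
  · obtain ⟨hsq, hsr⟩ := exP s hsa hsb hsp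
    by_cases htq : t ∈ q.support
    · exact ⟨r, hsr, exQ t hta htb htq⟩
    · exact ⟨q, hsq, htq⟩
  · by_cases htp : t ∈ p.support
    · obtain ⟨htq, htr⟩ := exP t hta htb htp
      by_cases hsq : s ∈ q.support
      · exact ⟨r, exQ s hsa hsb hsq, htr⟩
      · exact ⟨q, hsq, htq⟩
    · exact ⟨p, hsp, htp⟩

section Replace

variable {H H' : SimpleGraph ℕ} {u v x : ℕ}

lemma adj_ax (hux : H'.Adj u x) (hxv : H'.Adj x v) {a c : ℕ}
    (he : s(a, c) = s(u, v)) : H'.Adj a x := by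
  rcases Sym2.eq_iff.mp he with ⟨rfl, rfl⟩ | ⟨rfl, rfl⟩
  exacts [hux, hxv.symm]

lemma adj_xc (hux : H'.Adj u x) (hxv : H'.Adj x v) {a c : ℕ}
    (he : s(a, c) = s(u, v)) : H'.Adj x c := by
  rcases Sym2.eq_iff.mp he with ⟨rfl, rfl⟩ | ⟨rfl, rfl⟩
  exacts [hxv, hux.symm]

/-- Replace every use of the edge `s(u,v)` in a walk by the path `u - x - v`. -/
def replaceWalk (hux : H'.Adj u x) (hxv : H'.Adj x v)
    (hkeep : ∀ ⦃p q : ℕ⦄, H.Adj p q → s(p, q) ≠ s(u, v) → H'.Adj p q) :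
    ∀ {a b : ℕ}, H.Walk a b → H'.Walk a b
  | _, _, .nil => .nil
  | a, _, .cons (v := c) h p =>
    if he : s(a, c) = s(u, v) then
      .cons (adj_ax hux hxv he) (.cons (adj_xc hux hxv he)
        (replaceWalk hux hxv hkeep p))
    else .cons (hkeep h he) (replaceWalk hux hxv hkeep p)

variable (hux : H'.Adj u x) (hxv : H'.Adj x v)
    (hkeep : ∀ ⦃p q : ℕ⦄, H.Adj p q → s(p, q) ≠ s(u, v) → H'.Adj p q)

lemma replaceWalk_support : ∀ {a b : ℕ} (p : H.Walk a b),
    ∀ z ∈ (replaceWalk hux hxv hkeep p).support,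
      z ∈ p.support ∨ (z = x ∧ s(u, v) ∈ p.edges) := by
  intro a b p
  induction p with
  | nil => intro z hz; simp [replaceWalk] at hz; simp [hz]
  | cons h p ih =>
    intro z hz
    rw [replaceWalk] at hz
    split at hz
    · rename_i he
      simp only [SimpleGraph.Walk.support_cons, List.mem_cons] at hz ⊢
      rcases hz with rfl | rfl | hz
      · tauto
      · right; exact ⟨rfl, by simp [SimpleGraph.Walk.edges_cons, he]⟩
      · rcases ih z hz with h1 | ⟨rfl, h2⟩
        · tauto
        · right; exact ⟨rfl, by simp [SimpleGraph.Walk.edges_cons, h2]⟩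
    · rename_i he
      simp only [SimpleGraph.Walk.support_cons, List.mem_cons] at hz ⊢
      rcases hz with rfl | hz
      · tauto
      · rcases ih z hz with h1 | ⟨rfl, h2⟩
        · tauto
        · right; exact ⟨rfl, by simp [SimpleGraph.Walk.edges_cons, h2]⟩

lemma replaceWalk_edges : ∀ {a b : ℕ} (p : H.Walk a b),
    ∀ e ∈ (replaceWalk hux hxv hkeep p).edges,
      (e ∈ p.edges ∧ e ≠ s(u, v)) ∨
        ((e = s(u, x) ∨ e = s(x, v)) ∧ s(u, v) ∈ p.edges) := by
  intro a b p
  induction p with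
  | nil => intro e he; simp [replaceWalk] at he
  | cons h p ih =>
    intro e he
    rw [replaceWalk] at he
    split at he
    · rename_i heq
      simp only [SimpleGraph.Walk.edges_cons, List.mem_cons] at he ⊢
      rcases he with rfl | rfl | he
      · -- e = s(a, x)
        rcases Sym2.eq_iff.mp heq with ⟨rfl, rfl⟩ | ⟨rfl, rfl⟩
        · exact Or.inr ⟨Or.inl rfl, Or.inl heq.symm⟩
        · exact Or.inr ⟨Or.inr Sym2.eq_swap, Or.inl heq.symm⟩
      · -- e = s(x, c)
        rcases Sym2.eq_iff.mp heq with ⟨rfl, rfl⟩ | ⟨rfl, rfl⟩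
        · exact Or.inr ⟨Or.inr rfl, Or.inl heq.symm⟩
        · exact Or.inr ⟨Or.inl Sym2.eq_swap, Or.inl heq.symm⟩
      · rcases ih e he with ⟨h1, h2⟩ | ⟨h1, h2⟩
        · exact Or.inl ⟨Or.inr h1, h2⟩
        · exact Or.inr ⟨h1, Or.inr h2⟩
    · rename_i heq
      simp only [SimpleGraph.Walk.edges_cons, List.mem_cons] at he ⊢
      rcases he with rfl | he
      · exact Or.inl ⟨Or.inl rfl, heq⟩
      · rcases ih e he with ⟨h1, h2⟩ | ⟨h1, h2⟩
        · exact Or.inl ⟨Or.inr h1, h2⟩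
        · exact Or.inr ⟨h1, Or.inr h2⟩

end Replace

end K4Aux

namespace K4Aux
open SimpleGraph

lemma k4_three_walks {a b c d : ℕ} (ha : a < 4) (hb : b < 4) (hc : c < 4) (hd : d < 4)
    (hab : a ≠ b) (hac : a ≠ c) (had : a ≠ d) (hbc : b ≠ c) (hbd : b ≠ d) (hcd : c ≠ d) :
    ∃ p q r : K4.Walk a b, WalkSep p q ∧ WalkSep p r ∧ WalkSep q r := by
  refine ⟨Walk.cons (k4_adj ha hb hab) Walk.nil,
    Walk.cons (k4_adj ha hc hac) (Walk.cons (k4_adj hc hb hbc.symm) Walk.nil),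
    Walk.cons (k4_adj ha hd had) (Walk.cons (k4_adj hd hb hbd.symm) Walk.nil), ?_, ?_, ?_⟩ <;>
  refine ⟨?_, ?_⟩ <;>
  simp only [WalkSep, Walk.support_cons, Walk.support_nil, Walk.edges_cons,
      Walk.edges_nil, List.mem_cons, List.not_mem_nil, or_false, List.mem_singleton] <;>
  intro e he hf <;>
  first
    | omega
    | (subst he; simp only [Sym2.eq_iff] at hf; omega)
    | (rcases he with rfl | rfl <;> simp only [Sym2.eq_iff] at hf <;> omega)

lemma inv_K4 : Inv K4 := by
  refine ⟨?_, ?_, ?_⟩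
  · apply Set.Finite.subset (Set.finite_Iio 4)
    rintro z ⟨y, hy⟩
    exact (k4_adj_iff.mp hy).1
  · intro w
    constructor
    · intro h3
      by_contra hw
      push_neg at hw
      have : K4.neighborSet w = ∅ := by
        ext z; simp only [mem_neighborSet, k4_adj_iff, Set.mem_empty_iff_false, iff_false]
        intro h; omega
      rw [this] at h3; simp at h3
    · intro hw
      have key : ∀ c d e : ℕ, c ≠ d → c ≠ e → d ≠ e →
          K4.neighborSet w = {c, d, e} → (K4.neighborSet w).ncard = 3 := by
        intro c d e h1 h2 h3 hN
        rw [hN]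
        exact Set.ncard_eq_three.mpr ⟨c, d, e, h1, h2, h3, rfl⟩
      interval_cases w
      · refine key 1 2 3 (by omega) (by omega) (by omega) ?_
        ext z; simp [mem_neighborSet, k4_adj_iff]; omega
      · refine key 0 2 3 (by omega) (by omega) (by omega) ?_
        ext z; simp [mem_neighborSet, k4_adj_iff]; omega
      · refine key 0 1 3 (by omega) (by omega) (by omega) ?_
        ext z; simp [mem_neighborSet, k4_adj_iff]; omega
      · refine key 0 1 2 (by omega) (by omega) (by omega) ?_
        ext z; simp [mem_neighborSet, k4_adj_iff]; omega
  · intro a b ha hb hab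
    have : ∃ c d : ℕ, c < 4 ∧ d < 4 ∧ a ≠ c ∧ a ≠ d ∧ b ≠ c ∧ b ≠ d ∧ c ≠ d := by
      interval_cases a <;> interval_cases b <;> simp_all <;> decide
    obtain ⟨c, d, hc, hd, hac, had, hbc, hbd, hcd⟩ := this
    exact k4_three_walks ha hb hc hd hab hac had hbc hbd hcd

end K4Aux

namespace K4Aux
open SimpleGraph

lemma inv_step {H H' : SimpleGraph ℕ} (hI : Inv H) (hS : SubdivStep H H') : Inv H' := by
  classical
  obtain ⟨hfin, hdeg, hconn⟩ := hI
  obtain ⟨u, v, x, huv, hx, rfl⟩ := hS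
  have huvne : u ≠ v := huv.ne
  have hu_supp : u ∈ H.support := ⟨v, huv⟩
  have hv_supp : v ∈ H.support := ⟨u, huv.symm⟩
  have hxu : x ≠ u := fun h => hx (h ▸ hu_supp)
  have hxv : x ≠ v := fun h => hx (h ▸ hv_supp)
  have hxadj : ∀ y, ¬ H.Adj x y := fun y h => hx ⟨y, h⟩
  have hxadj' : ∀ y, ¬ H.Adj y x := fun y h => hxadj y h.symm
  set E' : Set (Sym2 ℕ) := (H.edgeSet \ {s(u, v)}) ∪ {s(u, x), s(x, v)} with hE'
  have memE' : ∀ p q : ℕ, s(p, q) ∈ E' ↔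
      ((H.Adj p q ∧ s(p, q) ≠ s(u, v)) ∨ s(p, q) = s(u, x) ∨ s(p, q) = s(x, v)) := by
    intro p q
    simp only [hE', Set.mem_union, Set.mem_diff, mem_edgeSet, Set.mem_insert_iff,
      Set.mem_singleton_iff]
  have hadj' : ∀ p q : ℕ, (SimpleGraph.fromEdgeSet E').Adj p q ↔
      (((H.Adj p q ∧ s(p, q) ≠ s(u, v)) ∨ s(p, q) = s(u, x) ∨ s(p, q) = s(x, v)) ∧ p ≠ q) := by
    intro p q; rw [SimpleGraph.fromEdgeSet_adj, memE']
  have hux' : (SimpleGraph.fromEdgeSet E').Adj u x :=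
    (hadj' u x).mpr ⟨Or.inr (Or.inl rfl), fun h => hxu h.symm⟩
  have hxv' : (SimpleGraph.fromEdgeSet E').Adj x v :=
    (hadj' x v).mpr ⟨Or.inr (Or.inr rfl), hxv⟩
  have hkeep : ∀ ⦃p q : ℕ⦄, H.Adj p q → s(p, q) ≠ s(u, v) →
      (SimpleGraph.fromEdgeSet E').Adj p q := by
    intro p q h hne
    exact (hadj' p q).mpr ⟨Or.inl ⟨h, hne⟩, h.ne⟩
  have hsupp' : (SimpleGraph.fromEdgeSet E').support ⊆ insert x H.support := by
    rintro z ⟨y, hy⟩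
    rcases ((hadj' z y).mp hy).1 with ⟨h1, _⟩ | h | h
    · exact Set.mem_insert_of_mem _ ⟨y, h1⟩
    · rcases Sym2.eq_iff.mp h with ⟨rfl, rfl⟩ | ⟨rfl, rfl⟩
      · exact Set.mem_insert_of_mem _ hu_supp
      · exact Set.mem_insert _ _
    · rcases Sym2.eq_iff.mp h with ⟨rfl, rfl⟩ | ⟨rfl, rfl⟩
      · exact Set.mem_insert _ _
      · exact Set.mem_insert_of_mem _ hv_supp
  have hfin' : (SimpleGraph.fromEdgeSet E').support.Finite :=
    Set.Finite.subset (hfin.insert x) hsupp'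
  -- x is not a branch vertex
  have hx4 : ¬ x < 4 := by
    intro h
    obtain ⟨y, hy⟩ := Set.nonempty_of_ncard_ne_zero (by rw [(hdeg x).mpr h]; omega)
    exact hxadj y hy
  -- neighbor set computations
  have hNfin : ∀ w, (H.neighborSet w).Finite := by
    intro w
    exact hfin.subset (fun z hz => ⟨w, (hz : H.Adj w z).symm⟩)
  have hNx : (SimpleGraph.fromEdgeSet E').neighborSet x = {u, v} := by
    ext q
    simp only [mem_neighborSet, hadj', Set.mem_insert_iff, Set.mem_singleton_iff]
    constructor
    · rintro ⟨⟨h1, _⟩ | h | h, hne⟩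
      · exact absurd h1 (hxadj q)
      · rcases Sym2.eq_iff.mp h with ⟨h1, h2⟩ | ⟨h1, h2⟩
        · exact absurd h2.symm hne
        · exact Or.inl h2
      · rcases Sym2.eq_iff.mp h with ⟨h1, h2⟩ | ⟨h1, h2⟩
        · exact Or.inr h2
        · exact absurd h2.symm hne
    · rintro (rfl | rfl)
      · exact ⟨Or.inr (Or.inl Sym2.eq_swap), fun h => hxu h⟩
      · exact ⟨Or.inr (Or.inr rfl), hxv⟩
  have hNu : (SimpleGraph.fromEdgeSet E').neighborSet u =
      insert x (H.neighborSet u \ {v}) := by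
    ext q
    simp only [mem_neighborSet, hadj', Set.mem_insert_iff, Set.mem_diff,
      Set.mem_singleton_iff]
    constructor
    · rintro ⟨⟨h1, h2⟩ | h | h, hne⟩
      · refine Or.inr ⟨h1, fun hq => h2 (by rw [hq])⟩
      · rcases Sym2.eq_iff.mp h with ⟨h1, h2⟩ | ⟨h1, h2⟩
        · exact Or.inl h2
        · exact absurd h1.symm hxu
      · rcases Sym2.eq_iff.mp h with ⟨h1, h2⟩ | ⟨h1, h2⟩
        · exact absurd h1.symm hxu
        · exact absurd h1 huvne
    · rintro (rfl | ⟨h1, h2⟩)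
      · exact ⟨Or.inr (Or.inl rfl), fun h => hxu h.symm⟩
      · refine ⟨Or.inl ⟨h1, fun h => ?_⟩, h1.ne⟩
        rcases Sym2.eq_iff.mp h with ⟨_, rfl⟩ | ⟨rfl, _⟩
        · exact h2 rfl
        · exact huvne rfl
  have hNv : (SimpleGraph.fromEdgeSet E').neighborSet v =
      insert x (H.neighborSet v \ {u}) := by
    ext q
    simp only [mem_neighborSet, hadj', Set.mem_insert_iff, Set.mem_diff,
      Set.mem_singleton_iff]
    constructor
    · rintro ⟨⟨h1, h2⟩ | h | h, hne⟩
      · refine Or.inr ⟨h1, fun hq => h2 (by rw [hq]; exact Sym2.eq_swap)⟩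
      · rcases Sym2.eq_iff.mp h with ⟨h1, h2⟩ | ⟨h1, h2⟩
        · exact absurd h1.symm huvne
        · exact absurd h1.symm hxv
      · rcases Sym2.eq_iff.mp h with ⟨h1, h2⟩ | ⟨h1, h2⟩
        · exact absurd h1.symm hxv
        · exact Or.inl h2
    · rintro (rfl | ⟨h1, h2⟩)
      · exact ⟨Or.inr (Or.inr Sym2.eq_swap), fun h => hxv h.symm⟩
      · refine ⟨Or.inl ⟨h1, fun h => ?_⟩, h1.ne⟩
        rcases Sym2.eq_iff.mp h with ⟨h3, h4⟩ | ⟨h3, h4⟩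
        · exact huvne h3.symm
        · exact h2 h4
  have hNw : ∀ w : ℕ, w ≠ u → w ≠ v → w ≠ x →
      (SimpleGraph.fromEdgeSet E').neighborSet w = H.neighborSet w := by
    intro w hwu hwv hwx
    ext q
    simp only [mem_neighborSet, hadj']
    constructor
    · rintro ⟨⟨h1, _⟩ | h | h, hne⟩
      · exact h1
      · rcases Sym2.eq_iff.mp h with ⟨h1, h2⟩ | ⟨h1, h2⟩
        · exact absurd h1 hwu
        · exact absurd h1 hwx
      · rcases Sym2.eq_iff.mp h with ⟨h1, h2⟩ | ⟨h1, h2⟩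
        · exact absurd h1 hwx
        · exact absurd h1 hwv
    · intro h1
      refine ⟨Or.inl ⟨h1, fun h => ?_⟩, h1.ne⟩
      rcases Sym2.eq_iff.mp h with ⟨h3, h4⟩ | ⟨h3, h4⟩
      · exact hwu h3
      · exact hwv h3
  -- the degree characterization
  have hdeg' : ∀ w, ((SimpleGraph.fromEdgeSet E').neighborSet w).ncard = 3 ↔ w < 4 := by
    intro w
    by_cases hwx : w = x
    · subst hwx
      rw [hNx, Set.ncard_pair huvne]
      simp only [hx4, iff_false]
      omega
    · by_cases hwu : w = u
      · subst hwu
        rw [hNu]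
        have hxmem : x ∉ H.neighborSet w \ {v} := fun h => hxadj' w h.1
        rw [Set.ncard_insert_of_notMem hxmem (hNfin w).diff,
          Set.ncard_diff_singleton_add_one (show v ∈ H.neighborSet w from huv) (hNfin w)]
        exact hdeg w
      · by_cases hwv : w = v
        · subst hwv
          rw [hNv]
          have hxmem : x ∉ H.neighborSet w \ {u} := fun h => hxadj' w h.1
          rw [Set.ncard_insert_of_notMem hxmem (hNfin w).diff,
            Set.ncard_diff_singleton_add_one (show u ∈ H.neighborSet w from huv.symm) (hNfin w)]
          exact hdeg w
        · rw [hNw w hwu hwv hwx]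
          exact hdeg w
  refine ⟨hfin', hdeg', ?_⟩
  -- connectivity of branch vertices
  intro a b ha hb hab
  obtain ⟨p, q, r, hpq, hpr, hqr⟩ := hconn a b ha hb hab
  have ha_supp : a ∈ H.support := by
    obtain ⟨y, hy⟩ := Set.nonempty_of_ncard_ne_zero (s := H.neighborSet a)
      (by rw [(hdeg a).mpr ha]; omega)
    exact ⟨y, hy⟩
  have hb_supp : b ∈ H.support := by
    obtain ⟨y, hy⟩ := Set.nonempty_of_ncard_ne_zero (s := H.neighborSet b)
      (by rw [(hdeg b).mpr hb]; omega)
    exact ⟨y, hy⟩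
  have hxsupp : ∀ (w : H.Walk a b), x ∉ w.support := fun w hw =>
    hx (mem_support_of_walk hb_supp w x hw)
  have hedgex : ∀ (w : H.Walk a b) (e : Sym2 ℕ), e ∈ w.edges →
      e ≠ s(u, x) ∧ e ≠ s(x, v) := by
    intro w e he
    have hH := w.edges_subset_edgeSet he
    constructor
    · rintro rfl; exact hxadj' u ((SimpleGraph.mem_edgeSet H).mp hH)
    · rintro rfl; exact hxadj v ((SimpleGraph.mem_edgeSet H).mp hH)
  have key : ∀ (w1 w2 : H.Walk a b), WalkSep w1 w2 →
      WalkSep (replaceWalk hux' hxv' hkeep w1) (replaceWalk hux' hxv' hkeep w2) := by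
    intro w1 w2 hsep
    constructor
    · intro z hz1 hz2
      rcases replaceWalk_support hux' hxv' hkeep w1 z hz1 with h1 | ⟨hzx1, he1⟩
      · rcases replaceWalk_support hux' hxv' hkeep w2 z hz2 with h2 | ⟨hzx2, he2⟩
        · exact hsep.1 z h1 h2
        · rw [hzx2] at h1; exact absurd h1 (hxsupp w1)
      · rcases replaceWalk_support hux' hxv' hkeep w2 z hz2 with h2 | ⟨hzx2, he2⟩
        · rw [hzx1] at h2; exact absurd h2 (hxsupp w2)
        · exact absurd he2 (hsep.2 _ he1)
    · intro e he1 he2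
      rcases replaceWalk_edges hux' hxv' hkeep w1 e he1 with ⟨h1, hne1⟩ | ⟨h1, huv1⟩
      · rcases replaceWalk_edges hux' hxv' hkeep w2 e he2 with ⟨h2, _⟩ | ⟨h2, _⟩
        · exact hsep.2 e h1 h2
        · rcases h2 with rfl | rfl
          · exact (hedgex w1 _ h1).1 rfl
          · exact (hedgex w1 _ h1).2 rfl
      · rcases replaceWalk_edges hux' hxv' hkeep w2 e he2 with ⟨h2, _⟩ | ⟨_, huv2⟩
        · rcases h1 with rfl | rfl
          · exact (hedgex w2 _ h2).1 rfl
          · exact (hedgex w2 _ h2).2 rfl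
        · exact hsep.2 _ huv1 huv2
  exact ⟨replaceWalk hux' hxv' hkeep p, replaceWalk hux' hxv' hkeep q,
    replaceWalk hux' hxv' hkeep r, key p q hpq, key p r hpr, key q r hqr⟩

end K4Aux

namespace K4Aux
open SimpleGraph

lemma inv_of_subdiv {H : SimpleGraph ℕ} (h : IsK4Subdivision H) : Inv H := by
  induction h with
  | refl => exact inv_K4
  | tail _ step ih => exact inv_step ih step

lemma reachable_induce_of_walk {H : SimpleGraph ℕ} {P : Set ℕ} {a b : ℕ}
    (p : H.Walk a b) : (∀ z ∈ p.support, z ∈ P) →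
    ∀ (ha : a ∈ P) (hb : b ∈ P), (H.induce P).Reachable ⟨a, ha⟩ ⟨b, hb⟩ := by
  induction p with
  | nil => intro _ ha hb; rfl
  | cons h p ih =>
    intro hp ha hb
    rename_i a' c b'
    have hc : c ∈ P := hp c (by
      rw [Walk.support_cons]
      exact List.mem_cons_of_mem _ p.start_mem_support)
    have hadj : (H.induce P).Adj ⟨_, ha⟩ ⟨_, hc⟩ := by
      simp only [comap_adj, Function.Embedding.coe_subtype]
      exact h
    exact hadj.reachable.trans (ih (fun z hz => hp z (by simp [Walk.support_cons, hz])) hc hb)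

lemma induce_mono_graph {H G : SimpleGraph ℕ} (hle : H ≤ G) (P : Set ℕ) :
    H.induce P ≤ G.induce P := by
  intro a b hab
  exact hle hab

end K4Aux


/-- If `{s,t}` is a separator of `G` (some two vertices outside `{s,t}` are connected
in `G` but not in `G - {s,t}`) and `H ≤ G` is a subdivision of `K₄`, then there is a
single connected component `X₀` of `G - {s,t}` containing all four branching nodes
(the vertices of degree 3 in `H`) in `X₀ ∪ {s,t}`. -/
theorem k4_subdivision_crosses_two_cut (G : SimpleGraph ℕ) (s t : ℕ)
    (hsep : ∃ a b : ℕ, ∃ (ha : a ∈ ({s, t} : Set ℕ)ᶜ) (hb : b ∈ ({s, t} : Set ℕ)ᶜ),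
      G.Reachable a b ∧
        ¬ (G.induce (({s, t} : Set ℕ)ᶜ)).Reachable ⟨a, ha⟩ ⟨b, hb⟩)
    (H : SimpleGraph ℕ) (hHG : H ≤ G) (hH : IsK4Subdivision H) :
    ∃ X₀ : (G.induce (({s, t} : Set ℕ)ᶜ)).ConnectedComponent,
      ∀ w : ℕ, (H.neighborSet w).ncard = 3 →
        w = s ∨ w = t ∨
          ∃ hw : w ∈ ({s, t} : Set ℕ)ᶜ,
            (⟨w, hw⟩ : ↥(({s, t} : Set ℕ)ᶜ)) ∈ X₀.supp := by
  classical
  obtain ⟨hfin, hdeg, hconn⟩ := K4Aux.inv_of_subdiv hH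
  set P : Set ℕ := ({s, t} : Set ℕ)ᶜ with hP
  obtain ⟨a0, ha0lt, ha0s, ha0t⟩ : ∃ a0, a0 < 4 ∧ a0 ≠ s ∧ a0 ≠ t := by
    by_cases h0 : 0 ≠ s ∧ 0 ≠ t
    · exact ⟨0, by omega, h0.1, h0.2⟩
    · by_cases h1 : 1 ≠ s ∧ 1 ≠ t
      · exact ⟨1, by omega, h1.1, h1.2⟩
      · refine ⟨if s = 2 ∨ t = 2 then 3 else 2, ?_, ?_, ?_⟩ <;> split_ifs <;> omega
  have ha0P : a0 ∈ P := by
    simp only [hP, Set.mem_compl_iff, Set.mem_insert_iff, Set.mem_singleton_iff]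
    tauto
  refine ⟨(G.induce P).connectedComponentMk ⟨a0, ha0P⟩, ?_⟩
  intro w hw3
  have hw4 : w < 4 := (hdeg w).mp hw3
  by_cases hws : w = s
  · exact Or.inl hws
  by_cases hwt : w = t
  · exact Or.inr (Or.inl hwt)
  have hwP : w ∈ P := by
    simp only [hP, Set.mem_compl_iff, Set.mem_insert_iff, Set.mem_singleton_iff]
    tauto
  refine Or.inr (Or.inr ⟨hwP, ?_⟩)
  rw [SimpleGraph.ConnectedComponent.mem_supp_iff]
  apply SimpleGraph.ConnectedComponent.sound
  -- reachability from ⟨w⟩ to ⟨a0⟩ in G.induce P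
  by_cases hwa : w = a0
  · subst hwa; rfl
  obtain ⟨p, q, r, hpq, hpr, hqr⟩ := hconn a0 w ha0lt hw4 (Ne.symm hwa)
  obtain ⟨wk, hwks, hwkt⟩ := K4Aux.pick_clean p q r hpq hpr hqr
    (Ne.symm ha0s) (fun h => hws h.symm) (Ne.symm ha0t) (fun h => hwt h.symm)
  have hsup : ∀ z ∈ wk.support, z ∈ P := by
    intro z hz
    simp only [hP, Set.mem_compl_iff, Set.mem_insert_iff, Set.mem_singleton_iff]
    rintro (rfl | rfl)
    · exact hwks hz
    · exact hwkt hz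
  have hreach := K4Aux.reachable_induce_of_walk wk hsup ha0P hwP
  exact ((hreach.mono (K4Aux.induce_mono_graph hHG P))).symm
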